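/- Let A be the real 3×3 matrix with rows (g,h,j), (d,e,f), (a,b,c), and suppose det(A) > 0 and a² + b² ≠ 0. Set ξ₁ = (a,b,c), ξ₂ = (bd−ae, cd−af, ce−bf), ξ₃ = (bg−ah, cg−aj, ch−bj), and define r = ‖ξ₁‖, y₁ = ‖ξ₂‖/‖ξ₁‖², y₂ = det(A)·‖ξ₁‖/‖ξ₂‖², x₁ = (ad+be+cf)/‖ξ₁‖², x₂ = (ξ₂·ξ₃)/‖ξ₂‖², x₃ = (ag+bh+cj)/‖ξ₁‖². Let k be the 3×3 matrix with rows ( (ce−bf)/‖ξ₂‖, (af−cd)/‖ξ₂‖, (bd−ae)/‖ξ₂‖ ), ( (b(bd−ae)+c(cd−af))/(‖ξ₁‖‖ξ₂‖), (a(ae−bd)+c(ce−bf))/(‖ξ₁‖‖ξ₂‖), (a(af−cd)+b(bf−ce))/(‖ξ₁‖‖ξ₂‖) ), ( a/‖ξ₁‖, b/‖ξ₁‖, c/‖ξ₁‖ ). Then y₁ > 0, y₂ > 0, k is orthogonal with det(k) = 1, and A = r · n(x) · diag(y₁y₂, y₁, 1) · k, where n(x) is the upper unitriangular matrix with rows (1,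 x₂, x₃), (0, 1, x₁), (0, 0, 1). -/

import Mathlib

set_option maxHeartbeats 2000000

private lemma iwa_kfact (d e f a b c s t : ℝ) :
    (!![(c * e - b * f) / t, (a * f - c * d) / t, (b * d - a * e) / t;
       (b * (b * d - a * e) + c * (c * d - a * f)) / (s * t),
         (a * (a * e - b * d) + c * (c * e - b * f)) / (s * t),
         (a * (a * f - c * d) + b * (b * f - c * e)) / (s * t);
       a / s, b / s, c / s] : Matrix (Fin 3) (Fin 3) ℝ) =
    !![t⁻¹, 0, 0; 0, (s*t)⁻¹, 0; 0, 0, s⁻¹] *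
    !![c*e-b*f, a*f-c*d, b*d-a*e;
       b*(b*d-a*e)+c*(c*d-a*f), a*(a*e-b*d)+c*(c*e-b*f), a*(a*f-c*d)+b*(b*f-c*e);
       a, b, c] := by
  ext i jj
  fin_cases i <;> fin_cases jj <;>
    simp [Matrix.mul_apply, Fin.sum_univ_three, Matrix.vecHead, Matrix.vecTail] <;> ring

private lemma iwa_BBt (d e f a b c s t : ℝ)
    (hs2 : s^2 = a^2+b^2+c^2)
    (ht2 : t^2 = (b*d-a*e)^2+(c*d-a*f)^2+(c*e-b*f)^2) :
    (!![c*e-b*f, a*f-c*d, b*d-a*e;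
       b*(b*d-a*e)+c*(c*d-a*f), a*(a*e-b*d)+c*(c*e-b*f), a*(a*f-c*d)+b*(b*f-c*e);
       a, b, c] : Matrix (Fin 3) (Fin 3) ℝ) *
    (!![c*e-b*f, b*(b*d-a*e)+c*(c*d-a*f), a;
       a*f-c*d, a*(a*e-b*d)+c*(c*e-b*f), b;
       b*d-a*e, a*(a*f-c*d)+b*(b*f-c*e), c] : Matrix (Fin 3) (Fin 3) ℝ) =
    !![t^2, 0, 0; 0, s^2*t^2, 0; 0, 0, s^2] := by
  ext i jj
  fin_cases i <;> fin_cases jj <;>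
    simp [Matrix.mul_apply, Fin.sum_univ_three, Matrix.vecHead, Matrix.vecTail] <;>
    first
      | ring1
      | linear_combination -ht2
      | linear_combination -hs2
      | linear_combination (-(t^2))*hs2 - (a^2+b^2+c^2)*ht2

private lemma iwa_detB (d e f a b c : ℝ) :
    (!![c*e-b*f, a*f-c*d, b*d-a*e;
       b*(b*d-a*e)+c*(c*d-a*f), a*(a*e-b*d)+c*(c*e-b*f), a*(a*f-c*d)+b*(b*f-c*e);
       a, b, c] : Matrix (Fin 3) (Fin 3) ℝ).det =
    (a^2+b^2+c^2) * ((b*d-a*e)^2+(c*d-a*f)^2+(c*e-b*f)^2) := by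
  simp [Matrix.det_fin_three]; ring

private lemma iwa_main (g h j d e f a b c : ℝ)
    (h1 : a^2+b^2+c^2 ≠ 0)
    (h2 : (b*d-a*e)^2+(c*d-a*f)^2+(c*e-b*f)^2 ≠ 0) :
    (!![g, h, j; d, e, f; a, b, c] : Matrix (Fin 3) (Fin 3) ℝ) =
    !![1, ((b*d-a*e)*(b*g-a*h)+(c*d-a*f)*(c*g-a*j)+(c*e-b*f)*(c*h-b*j)) /
          ((b*d-a*e)^2+(c*d-a*f)^2+(c*e-b*f)^2),
        (a*g+b*h+c*j)/(a^2+b^2+c^2);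
       0, 1, (a*d+b*e+c*f)/(a^2+b^2+c^2);
       0, 0, 1] *
    !![(g*(c*e-b*f) - h*(c*d-a*f) + j*(b*d-a*e)) /
        ((b*d-a*e)^2+(c*d-a*f)^2+(c*e-b*f)^2), 0, 0;
       0, 1/(a^2+b^2+c^2), 0; 0, 0, 1] *
    !![c*e-b*f, a*f-c*d, b*d-a*e;
       b*(b*d-a*e)+c*(c*d-a*f), a*(a*e-b*d)+c*(c*e-b*f), a*(a*f-c*d)+b*(b*f-c*e);
       a, b, c] := by
  have h2' : (b*d-e*a)^2+(c*d-f*a)^2+(c*e-b*f)^2 ≠ 0 := by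
    rw [mul_comm e a, mul_comm f a]; exact h2
  ext i jj
  fin_cases i <;> fin_cases jj <;>
    simp [Matrix.mul_apply, Fin.sum_univ_three, Matrix.vecHead, Matrix.vecTail] <;>
    field_simp <;> ring1

/-- The explicit Iwasawa decomposition `A = r · n(x) · diag(y₁y₂, y₁, 1) · k` of a real
3×3 matrix `A` with positive determinant and `a² + b² ≠ 0`, with all components given
by explicit formulas in the entries of `A`. -/
theorem stmt_8 (g h j d e f a b c : ℝ)
    (hdet : 0 < (!![g, h, j; d, e, f; a, b, c] : Matrix (Fin 3) (Fin 3) ℝ).det)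
    (hab : a ^ 2 + b ^ 2 ≠ 0) :
    let A : Matrix (Fin 3) (Fin 3) ℝ := !![g, h, j; d, e, f; a, b, c]
    let n₁ : ℝ := Real.sqrt (a ^ 2 + b ^ 2 + c ^ 2)
    let n₂ : ℝ := Real.sqrt ((b * d - a * e) ^ 2 + (c * d - a * f) ^ 2 + (c * e - b * f) ^ 2)
    let r : ℝ := n₁
    let y₁ : ℝ := n₂ / n₁ ^ 2
    let y₂ : ℝ := A.det * n₁ / n₂ ^ 2
    let x₁ : ℝ := (a * d + b * e + c * f) / n₁ ^ 2
    let x₂ : ℝ := ((b * d - a * e) * (b * g - a * h) + (c * d - a * f) * (c * g - a * j) +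
      (c * e - b * f) * (c * h - b * j)) / n₂ ^ 2
    let x₃ : ℝ := (a * g + b * h + c * j) / n₁ ^ 2
    let k : Matrix (Fin 3) (Fin 3) ℝ :=
      !![(c * e - b * f) / n₂, (a * f - c * d) / n₂, (b * d - a * e) / n₂;
         (b * (b * d - a * e) + c * (c * d - a * f)) / (n₁ * n₂),
           (a * (a * e - b * d) + c * (c * e - b * f)) / (n₁ * n₂),
           (a * (a * f - c * d) + b * (b * f - c * e)) / (n₁ * n₂);
         a / n₁, b / n₁, c / n₁]
    0 < y₁ ∧ 0 < y₂ ∧ k.transpose * k = 1 ∧ k.det = 1 ∧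
      A = r • (!![1, x₂, x₃; 0, 1, x₁; 0, 0, 1] *
        Matrix.diagonal ![y₁ * y₂, y₁, 1] * k) := by
  intro A n₁ n₂ r y₁ y₂ x₁ x₂ x₃ k
  have hdetP : (!![g, h, j; d, e, f; a, b, c] : Matrix (Fin 3) (Fin 3) ℝ).det =
      g*(c*e-b*f) - h*(c*d-a*f) + j*(b*d-a*e) := by
    simp [Matrix.det_fin_three]; ring
  have hP : 0 < g*(c*e-b*f) - h*(c*d-a*f) + j*(b*d-a*e) := by
    rw [← hdetP]; exact hdet
  have hS1 : 0 < a^2+b^2+c^2 := by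
    have h0 : 0 < a^2+b^2 := lt_of_le_of_ne (by positivity) (Ne.symm hab)
    nlinarith [sq_nonneg c]
  have hS2 : 0 < (b*d-a*e)^2+(c*d-a*f)^2+(c*e-b*f)^2 := by
    rcases lt_or_eq_of_le (by positivity : (0:ℝ) ≤ (b*d-a*e)^2+(c*d-a*f)^2+(c*e-b*f)^2) with hlt | heq
    · exact hlt
    · exfalso
      have h1 : b*d-a*e = 0 := by nlinarith [sq_nonneg (b*d-a*e), sq_nonneg (c*d-a*f), sq_nonneg (c*e-b*f)]
      have h2 : c*d-a*f = 0 := by nlinarith [sq_nonneg (b*d-a*e), sq_nonneg (c*d-a*f), sq_nonneg (c*e-b*f)]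
      have h3 : c*e-b*f = 0 := by nlinarith [sq_nonneg (b*d-a*e), sq_nonneg (c*d-a*f), sq_nonneg (c*e-b*f)]
      rw [h1, h2, h3] at hP
      simp at hP
  have hn1 : 0 < n₁ := Real.sqrt_pos.mpr hS1
  have hn2 : 0 < n₂ := Real.sqrt_pos.mpr hS2
  have hs2 : n₁^2 = a^2+b^2+c^2 := Real.sq_sqrt hS1.le
  have ht2 : n₂^2 = (b*d-a*e)^2+(c*d-a*f)^2+(c*e-b*f)^2 := Real.sq_sqrt hS2.le
  have hn1' : n₁ ≠ 0 := hn1.ne'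
  have hn2' : n₂ ≠ 0 := hn2.ne'
  have hk : k = !![n₂⁻¹, 0, 0; 0, (n₁*n₂)⁻¹, 0; 0, 0, n₁⁻¹] *
      !![c*e-b*f, a*f-c*d, b*d-a*e;
         b*(b*d-a*e)+c*(c*d-a*f), a*(a*e-b*d)+c*(c*e-b*f), a*(a*f-c*d)+b*(b*f-c*e);
         a, b, c] := iwa_kfact d e f a b c n₁ n₂
  have hBt : (!![c*e-b*f, a*f-c*d, b*d-a*e;
         b*(b*d-a*e)+c*(c*d-a*f), a*(a*e-b*d)+c*(c*e-b*f), a*(a*f-c*d)+b*(b*f-c*e);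
         a, b, c] : Matrix (Fin 3) (Fin 3) ℝ).transpose =
      !![c*e-b*f, b*(b*d-a*e)+c*(c*d-a*f), a;
         a*f-c*d, a*(a*e-b*d)+c*(c*e-b*f), b;
         b*d-a*e, a*(a*f-c*d)+b*(b*f-c*e), c] := by
    ext i jj; fin_cases i <;> fin_cases jj <;> rfl
  have hDt : (!![n₂⁻¹, 0, 0; 0, (n₁*n₂)⁻¹, 0; 0, 0, n₁⁻¹] :
      Matrix (Fin 3) (Fin 3) ℝ).transpose = !![n₂⁻¹, 0, 0; 0, (n₁*n₂)⁻¹, 0; 0, 0, n₁⁻¹] := by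
    ext i jj; fin_cases i <;> fin_cases jj <;> rfl
  have hkkt : k * k.transpose = 1 := by
    rw [hk, Matrix.transpose_mul, hBt, hDt, Matrix.mul_assoc, ← Matrix.mul_assoc
      (!![c*e-b*f, a*f-c*d, b*d-a*e;
         b*(b*d-a*e)+c*(c*d-a*f), a*(a*e-b*d)+c*(c*e-b*f), a*(a*f-c*d)+b*(b*f-c*e);
         a, b, c] : Matrix (Fin 3) (Fin 3) ℝ),
      iwa_BBt d e f a b c n₁ n₂ hs2 ht2]
    ext i jj
    fin_cases i <;> fin_cases jj <;>
      simp [Matrix.mul_apply, Fin.sum_univ_three, Matrix.one_apply, Matrix.vecHead, Matrix.vecTail] <;>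
      field_simp <;> ring1
  refine ⟨div_pos hn2 (pow_pos hn1 2), div_pos (mul_pos hdet hn1) (pow_pos hn2 2),
    mul_eq_one_comm.mp hkkt, ?_, ?_⟩
  · rw [hk, Matrix.det_mul, iwa_detB, Matrix.det_fin_three, ← hs2, ← ht2]
    simp [Matrix.vecHead, Matrix.vecTail]
    field_simp
  · have hdg : Matrix.diagonal ![y₁ * y₂, y₁, (1:ℝ)] = !![y₁*y₂, 0, 0; 0, y₁, 0; 0, 0, 1] := by
      ext i jj; fin_cases i <;> fin_cases jj <;> simp [Matrix.diagonal, Matrix.vecHead, Matrix.vecTail]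
    rw [hdg, hk, Matrix.mul_assoc, ← Matrix.mul_assoc (!![y₁*y₂, 0, 0; 0, y₁, 0; 0, 0, 1] :
      Matrix (Fin 3) (Fin 3) ℝ), ← Matrix.mul_smul, ← Matrix.smul_mul]
    have hE : r • ((!![y₁*y₂, 0, 0; 0, y₁, 0; 0, 0, 1] : Matrix (Fin 3) (Fin 3) ℝ) *
        !![n₂⁻¹, 0, 0; 0, (n₁*n₂)⁻¹, 0; 0, 0, n₁⁻¹]) =
        !![(g*(c*e-b*f) - h*(c*d-a*f) + j*(b*d-a*e)) /
            ((b*d-a*e)^2+(c*d-a*f)^2+(c*e-b*f)^2), 0, 0;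
           0, 1/(a^2+b^2+c^2), 0; 0, 0, 1] := by
      have hy1 : y₁ = n₂ / n₁^2 := rfl
      have hy2 : y₂ = (g*(c*e-b*f) - h*(c*d-a*f) + j*(b*d-a*e)) * n₁ / n₂^2 := by
        show A.det * n₁ / n₂ ^ 2 = _
        rw [show A.det = (!![g, h, j; d, e, f; a, b, c] : Matrix (Fin 3) (Fin 3) ℝ).det from rfl, hdetP]
      have hQ' : (b*d-e*a)^2+(c*d-f*a)^2+(c*e-b*f)^2 ≠ 0 := by
        rw [mul_comm e a, mul_comm f a]; exact hS2.ne'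
      ext i jj
      fin_cases i <;> fin_cases jj <;>
        simp [Matrix.mul_apply, Fin.sum_univ_three, Matrix.smul_apply, Matrix.vecHead,
          Matrix.vecTail, hy1, hy2, r] <;>
        field_simp <;>
        first
          | ring1
          | linear_combination hs2
          | linear_combination -hs2
          | linear_combination ht2
          | linear_combination -ht2
          | linear_combination (g*(c*e-b*f) - h*(c*d-a*f) + j*(b*d-a*e)) * n₁^2 * n₂ * ht2
          | linear_combination (-((g*(c*e-b*f) - h*(c*d-a*f) + j*(b*d-a*e)) * n₁^2 * n₂)) * ht2
          | linear_combination n₁*n₂*hs2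
          | linear_combination (-(n₁*n₂))*hs2
          | linear_combination (-(g*(c*e-b*f) - h*(c*d-a*f) + j*(b*d-a*e))) * ht2
    rw [hE, ← Matrix.mul_assoc]
    have hx1 : x₁ = (a*d+b*e+c*f)/(a^2+b^2+c^2) := by
      show (a * d + b * e + c * f) / n₁ ^ 2 = _; rw [hs2]
    have hx2 : x₂ = ((b*d-a*e)*(b*g-a*h)+(c*d-a*f)*(c*g-a*j)+(c*e-b*f)*(c*h-b*j)) /
        ((b*d-a*e)^2+(c*d-a*f)^2+(c*e-b*f)^2) := by
      show _ / n₂ ^ 2 = _; rw [ht2]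
    have hx3 : x₃ = (a*g+b*h+c*j)/(a^2+b^2+c^2) := by
      show (a * g + b * h + c * j) / n₁ ^ 2 = _; rw [hs2]
    rw [hx1, hx2, hx3]
    exact iwa_main g h j d e f a b c hS1.ne' hS2.ne'
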